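/- If u and v are rational unit vectors of the same colour (both red, both white, or both black), then ⟪u, v⟫ ≠ 0; consequently the red/white/black colouring is a proper 3-colouring of the subgraph of G induced by the rational unit vectors. -/

import Mathlib

open scoped RealInnerProductSpace


lemma odd_sq_zmod4 (a : ℤ) (h : Odd a) : ((a : ZMod 4))^2 = 1 := by
  obtain ⟨k, rfl⟩ := h
  push_cast
  have h4 : (4 : ZMod 4) = 0 := by decide
  ring_nf
  rw [h4]
  ring

lemma even_of_sq_zmod4 (a : ℤ) (h : ((a : ZMod 4))^2 ≠ 1) : Even a := by
  rcases Int.even_or_odd a with h2 | h2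
  · exact h2
  · exact absurd (odd_sq_zmod4 a h2) h

lemma sq_zmod4 : ∀ x : ZMod 4, x^2 = 0 ∨ x^2 = 1 := by decide

lemma key (a b c d a' b' c' d' : ℤ) (h1 : a^2+b^2+c^2 = d^2) (h2 : a'^2+b'^2+c'^2 = d'^2)
    (hdot : a*a' + b*b' + c*c' = 0)
    (ho : (Odd a ∧ Odd a') ∨ (Odd b ∧ Odd b') ∨ (Odd c ∧ Odd c')) : False := by
  have main : ∀ x y z w : ℤ, x^2+y^2+z^2 = w^2 → Odd x → Even y ∧ Even z := by
    intro x y z w h hx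
    have h4 : ((x:ZMod 4))^2 + (y:ZMod 4)^2 + (z:ZMod 4)^2 = (w:ZMod 4)^2 := by
      have := congrArg (fun t : ℤ => (t : ZMod 4)) h
      push_cast at this
      exact this
    rw [odd_sq_zmod4 x hx] at h4
    constructor
    · apply even_of_sq_zmod4
      intro hy
      rw [hy] at h4
      rcases sq_zmod4 (z:ZMod 4) with hz | hz <;> rcases sq_zmod4 (w:ZMod 4) with hw | hw <;>
        rw [hz, hw] at h4 <;> revert h4 <;> decide
    · apply even_of_sq_zmod4
      intro hz
      rw [hz] at h4
      rcases sq_zmod4 (y:ZMod 4) with hy | hy <;> rcases sq_zmod4 (w:ZMod 4) with hw | hw <;>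
        rw [hy, hw] at h4 <;> revert h4 <;> decide
  have hodd : Odd (a*a' + b*b' + c*c') := by
    rcases ho with ⟨hx, hx'⟩ | ⟨hx, hx'⟩ | ⟨hx, hx'⟩
    · obtain ⟨hb, hc⟩ := main a b c d h1 hx
      obtain ⟨hb', hc'⟩ := main a' b' c' d' h2 hx'
      have : Odd (a*a' + (b*b' + c*c')) :=
        (hx.mul hx').add_even ((hb.mul_right _).add (hc.mul_right _))
      rwa [show a*a' + (b*b'+c*c') = a*a'+b*b'+c*c' by ring] at this
    · obtain ⟨ha, hc⟩ := main b a c d (by linarith) hx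
      obtain ⟨ha', hc'⟩ := main b' a' c' d' (by linarith) hx'
      have : Odd (b*b' + (a*a' + c*c')) :=
        (hx.mul hx').add_even ((ha.mul_right _).add (hc.mul_right _))
      rwa [show b*b' + (a*a'+c*c') = a*a'+b*b'+c*c' by ring] at this
    · obtain ⟨ha, hb⟩ := main c a b d (by linarith) hx
      obtain ⟨ha', hb'⟩ := main c' a' b' d' (by linarith) hx'
      have : Odd (c*c' + (a*a' + b*b')) :=
        (hx.mul hx').add_even ((ha.mul_right _).add (hb.mul_right _))
      rwa [show c*c' + (a*a'+b*b') = a*a'+b*b'+c*c' by ring] at this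
  rw [hdot] at hodd
  simp at hodd


lemma exists_rep (q0 q1 q2 : ℚ) (h : q0^2 + q1^2 + q2^2 = 1) :
    ∃ a b c d : ℤ, 0 < d ∧ q0 = (a:ℚ)/(d:ℚ) ∧ q1 = (b:ℚ)/(d:ℚ) ∧ q2 = (c:ℚ)/(d:ℚ) ∧
      a^2+b^2+c^2 = d^2 ∧ (Odd a ∨ Odd b ∨ Odd c) := by
  set d0 : ℤ := (q0.den : ℤ) * q1.den * q2.den with hd0
  have hd0pos : 0 < d0 := by positivity
  set a0 : ℤ := q0.num * q1.den * q2.den with ha0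
  set b0 : ℤ := q1.num * q0.den * q2.den with hb0
  set c0 : ℤ := q2.num * q0.den * q1.den with hc0
  have ea : (a0 : ℚ) = q0 * d0 := by
    rw [ha0, hd0]; push_cast
    rw [show (q0:ℚ) * ((q0.den:ℚ) * q1.den * q2.den) = (q0 * q0.den) * q1.den * q2.den by ring,
      Rat.mul_den_eq_num]
  have eb : (b0 : ℚ) = q1 * d0 := by
    rw [hb0, hd0]; push_cast
    rw [show (q1:ℚ) * ((q0.den:ℚ) * q1.den * q2.den) = (q1 * q1.den) * q0.den * q2.den by ring,
      Rat.mul_den_eq_num]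
  have ec : (c0 : ℚ) = q2 * d0 := by
    rw [hc0, hd0]; push_cast
    rw [show (q2:ℚ) * ((q0.den:ℚ) * q1.den * q2.den) = (q2 * q2.den) * q0.den * q1.den by ring,
      Rat.mul_den_eq_num]
  have hsum0 : a0^2 + b0^2 + c0^2 = d0^2 := by
    have : ((a0^2 + b0^2 + c0^2 : ℤ) : ℚ) = ((d0^2 : ℤ) : ℚ) := by
      push_cast [ea, eb, ec]
      nlinarith [h]
    exact_mod_cast this
  set g : ℕ := Int.gcd (Int.gcd (Int.gcd a0 b0) c0) d0 with hg
  have hgd : (g : ℤ) ∣ d0 := Int.gcd_dvd_right _ _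
  have hga : (g : ℤ) ∣ a0 := dvd_trans (dvd_trans (Int.gcd_dvd_left _ _) (Int.gcd_dvd_left _ _)) (Int.gcd_dvd_left _ _)
  have hgb : (g : ℤ) ∣ b0 := dvd_trans (dvd_trans (Int.gcd_dvd_left _ _) (Int.gcd_dvd_left _ _)) (Int.gcd_dvd_right _ _)
  have hgc : (g : ℤ) ∣ c0 := dvd_trans (Int.gcd_dvd_left _ _) (Int.gcd_dvd_right _ _)
  have hgpos : 0 < (g:ℤ) := by
    exact_mod_cast (Int.gcd_pos_iff).mpr (Or.inr hd0pos.ne')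
  obtain ⟨a, ha⟩ := hga; obtain ⟨b, hb⟩ := hgb; obtain ⟨c, hc⟩ := hgc; obtain ⟨d, hd⟩ := hgd
  have hdpos : 0 < d := by nlinarith
  refine ⟨a, b, c, d, hdpos, ?_, ?_, ?_, ?_, ?_⟩
  · have hq : (a0 : ℚ) / d0 = (a : ℚ) / d := by
      rw [ha, hd]; push_cast
      rw [mul_div_mul_left _ _ (by exact_mod_cast hgpos.ne' : ((g:ℚ) ≠ 0))]
    rw [← hq, ea, mul_div_cancel_right₀ _ (by exact_mod_cast hd0pos.ne' : ((d0:ℚ) ≠ 0))]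
  · have hq : (b0 : ℚ) / d0 = (b : ℚ) / d := by
      rw [hb, hd]; push_cast
      rw [mul_div_mul_left _ _ (by exact_mod_cast hgpos.ne' : ((g:ℚ) ≠ 0))]
    rw [← hq, eb, mul_div_cancel_right₀ _ (by exact_mod_cast hd0pos.ne' : ((d0:ℚ) ≠ 0))]
  · have hq : (c0 : ℚ) / d0 = (c : ℚ) / d := by
      rw [hc, hd]; push_cast
      rw [mul_div_mul_left _ _ (by exact_mod_cast hgpos.ne' : ((g:ℚ) ≠ 0))]
    rw [← hq, ec, mul_div_cancel_right₀ _ (by exact_mod_cast hd0pos.ne' : ((d0:ℚ) ≠ 0))]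
  · have : (g:ℤ)^2 * (a^2+b^2+c^2) = (g:ℤ)^2 * d^2 := by
      rw [show (g:ℤ)^2*(a^2+b^2+c^2) = (g*a)^2+(g*b)^2+(g*c)^2 by ring, ← ha, ← hb, ← hc,
        show (g:ℤ)^2*d^2 = (g*d)^2 by ring, ← hd]
      exact hsum0
    exact mul_left_cancel₀ (by positivity) this
  · -- at least one odd
    by_contra hall
    push_neg at hall
    obtain ⟨hea, heb, hec⟩ := hall
    rw [Int.not_odd_iff_even] at hea heb hec
    have hsum : a^2+b^2+c^2 = d^2 := by
      have : (g:ℤ)^2 * (a^2+b^2+c^2) = (g:ℤ)^2 * d^2 := by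
        rw [show (g:ℤ)^2*(a^2+b^2+c^2) = (g*a)^2+(g*b)^2+(g*c)^2 by ring, ← ha, ← hb, ← hc,
          show (g:ℤ)^2*d^2 = (g*d)^2 by ring, ← hd]
        exact hsum0
      exact mul_left_cancel₀ (by positivity) this
    have hed : Even d := by
      have : Even (d^2) := by
        rw [← hsum, sq, sq, sq]
        exact ((hea.mul_right a).add (heb.mul_right b)).add (hec.mul_right c)
      exact (Int.even_pow.mp this).1
    -- 2 divides g * (gcd a b c d') contradiction: show gcd(a,b,c,d) = 1
    have hG : Int.gcd (Int.gcd (Int.gcd a b) c) d = 1 := by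
      have h1 : Int.gcd (g*a : ℤ) (g*b : ℤ) = g * Int.gcd a b := by
        rw [Int.gcd_mul_left]; simp
      have h2 : Int.gcd ((g:ℤ) * Int.gcd a b) (g*c : ℤ) = g * Int.gcd (Int.gcd a b : ℤ) c := by
        rw [Int.gcd_mul_left]; simp
      have h3 : Int.gcd ((g:ℤ) * Int.gcd (Int.gcd a b : ℤ) c) (g*d : ℤ)
          = g * Int.gcd (Int.gcd (Int.gcd a b : ℤ) c : ℤ) d := by
        rw [Int.gcd_mul_left]; simp
      have : g = g * Int.gcd (Int.gcd (Int.gcd a b : ℤ) c : ℤ) d := by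
        conv_lhs => rw [hg, ha, hb, hc, hd]
        rw [h1]
        push_cast
        rw [h2]
        push_cast
        rw [h3]
      have hgne : 0 < g := by exact_mod_cast hgpos
      nth_rewrite 1 [← mul_one g] at this
      exact (Nat.eq_of_mul_eq_mul_left hgne this).symm
    have h2dvd : (2:ℤ) ∣ (Int.gcd (Int.gcd (Int.gcd a b : ℤ) c : ℤ) d : ℤ) := by
      apply Int.dvd_coe_gcd _ hed.two_dvd
      apply Int.dvd_coe_gcd _ hec.two_dvd
      exact Int.dvd_coe_gcd hea.two_dvd heb.two_dvd
    rw [hG] at h2dvd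
    norm_num at h2dvd


lemma norm_int (u : EuclideanSpace ℝ (Fin 3)) (a b c d : ℤ) (hd : 0 < d) (h : ‖u‖ = 1)
    (h0 : u 0 = (a:ℝ)/(d:ℝ)) (h1 : u 1 = (b:ℝ)/(d:ℝ)) (h2 : u 2 = (c:ℝ)/(d:ℝ)) :
    a^2 + b^2 + c^2 = d^2 := by
  have hinner := real_inner_self_eq_norm_sq u
  rw [h] at hinner
  simp only [PiLp.inner_apply, RCLike.inner_apply, conj_trivial, Fin.sum_univ_three] at hinner
  rw [h0, h1, h2] at hinner
  have hdne : (d:ℝ) ≠ 0 := by exact_mod_cast hd.ne'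
  have : ((a^2+b^2+c^2 : ℤ) : ℝ) = ((d^2 : ℤ) : ℝ) := by
    push_cast
    field_simp at hinner
    nlinarith [hinner]
  exact_mod_cast this

lemma dot_int (u v : EuclideanSpace ℝ (Fin 3)) (a b c d a' b' c' d' : ℤ)
    (hd : 0 < d) (hd' : 0 < d')
    (hu0 : u 0 = (a:ℝ)/(d:ℝ)) (hu1 : u 1 = (b:ℝ)/(d:ℝ)) (hu2 : u 2 = (c:ℝ)/(d:ℝ))
    (hv0 : v 0 = (a':ℝ)/(d':ℝ)) (hv1 : v 1 = (b':ℝ)/(d':ℝ)) (hv2 : v 2 = (c':ℝ)/(d':ℝ))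
    (h : ⟪u, v⟫ = 0) : a*a' + b*b' + c*c' = 0 := by
  simp only [PiLp.inner_apply, RCLike.inner_apply, conj_trivial, Fin.sum_univ_three] at h
  rw [hu0, hu1, hu2, hv0, hv1, hv2] at h
  have hdne : (d:ℝ) ≠ 0 := by exact_mod_cast hd.ne'
  have hdne' : (d':ℝ) ≠ 0 := by exact_mod_cast hd'.ne'
  have : ((a*a' + b*b' + c*c' : ℤ) : ℝ) = ((0 : ℤ) : ℝ) := by
    push_cast
    field_simp at h
    linarith [h]
  exact_mod_cast this

/-- Rational unit vectors of the same colour (colour given by which of the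
reduced integer coordinates is odd) are never orthogonal; consequently the
red/white/black colouring is a proper 3-colouring of the orthogonality graph
on the rational points of the unit sphere in `ℝ³`. -/
theorem same_colour_not_orthogonal :
    (∀ (u v : EuclideanSpace ℝ (Fin 3)) (a b c d a' b' c' d' : ℤ),
      ‖u‖ = 1 → ‖v‖ = 1 → 0 < d → 0 < d' →
      Int.gcd (Int.gcd a b : ℤ) c = 1 → Int.gcd (Int.gcd a' b' : ℤ) c' = 1 →
      u 0 = (a : ℝ) / (d : ℝ) → u 1 = (b : ℝ) / (d : ℝ) → u 2 = (c : ℝ) / (d : ℝ) →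
      v 0 = (a' : ℝ) / (d' : ℝ) → v 1 = (b' : ℝ) / (d' : ℝ) → v 2 = (c' : ℝ) / (d' : ℝ) →
      ((Odd a ∧ Odd a') ∨ (Odd b ∧ Odd b') ∨ (Odd c ∧ Odd c')) →
      ⟪u, v⟫ ≠ 0) ∧
    ∃ col : {x : EuclideanSpace ℝ (Fin 3) // ‖x‖ = 1 ∧ ∀ i, ∃ q : ℚ, x i = (q : ℝ)} → Fin 3,
      ∀ u v : {x : EuclideanSpace ℝ (Fin 3) // ‖x‖ = 1 ∧ ∀ i, ∃ q : ℚ, x i = (q : ℝ)},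
        ⟪(u : EuclideanSpace ℝ (Fin 3)), (v : EuclideanSpace ℝ (Fin 3))⟫ = 0 →
          col u ≠ col v := by
  constructor
  · intro u v a b c d a' b' c' d' hu hv hd hd' _ _ hu0 hu1 hu2 hv0 hv1 hv2 ho hip
    exact key a b c d a' b' c' d' (norm_int u a b c d hd hu hu0 hu1 hu2)
      (norm_int v a' b' c' d' hd' hv hv0 hv1 hv2)
      (dot_int u v a b c d a' b' c' d' hd hd' hu0 hu1 hu2 hv0 hv1 hv2 hip) ho
  · have rep : ∀ u : {x : EuclideanSpace ℝ (Fin 3) // ‖x‖ = 1 ∧ ∀ i, ∃ q : ℚ, x i = (q : ℝ)},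
        ∃ a b c d : ℤ, 0 < d ∧ (u : EuclideanSpace ℝ (Fin 3)) 0 = (a:ℝ)/(d:ℝ) ∧
          (u : EuclideanSpace ℝ (Fin 3)) 1 = (b:ℝ)/(d:ℝ) ∧
          (u : EuclideanSpace ℝ (Fin 3)) 2 = (c:ℝ)/(d:ℝ) ∧
          a^2+b^2+c^2 = d^2 ∧ (Odd a ∨ Odd b ∨ Odd c) := by
      rintro ⟨x, hx, hq⟩
      obtain ⟨q0, h0⟩ := hq 0
      obtain ⟨q1, h1⟩ := hq 1
      obtain ⟨q2, h2⟩ := hq 2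
      have hsq : q0^2 + q1^2 + q2^2 = 1 := by
        have hinner := real_inner_self_eq_norm_sq x
        rw [hx] at hinner
        simp only [PiLp.inner_apply, RCLike.inner_apply, conj_trivial,
          Fin.sum_univ_three] at hinner
        rw [h0, h1, h2] at hinner
        have : ((q0^2+q1^2+q2^2 : ℚ) : ℝ) = ((1 : ℚ) : ℝ) := by
          push_cast
          nlinarith [hinner]
        exact_mod_cast this
      obtain ⟨a, b, c, d, hd, e0, e1, e2, hsum, hodd⟩ := exists_rep q0 q1 q2 hsq
      refine ⟨a, b, c, d, hd, ?_, ?_, ?_, hsum, hodd⟩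
      · rw [show ((⟨x, hx, hq⟩ : {x : EuclideanSpace ℝ (Fin 3) // ‖x‖ = 1 ∧
            ∀ i, ∃ q : ℚ, x i = (q : ℝ)}) : EuclideanSpace ℝ (Fin 3)) 0 = x 0 from rfl,
          h0, e0]
        push_cast
        ring
      · rw [show ((⟨x, hx, hq⟩ : {x : EuclideanSpace ℝ (Fin 3) // ‖x‖ = 1 ∧
            ∀ i, ∃ q : ℚ, x i = (q : ℝ)}) : EuclideanSpace ℝ (Fin 3)) 1 = x 1 from rfl,
          h1, e1]
        push_cast
        ring
      · rw [show ((⟨x, hx, hq⟩ : {x : EuclideanSpace ℝ (Fin 3) // ‖x‖ = 1 ∧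
            ∀ i, ∃ q : ℚ, x i = (q : ℝ)}) : EuclideanSpace ℝ (Fin 3)) 2 = x 2 from rfl,
          h2, e2]
        push_cast
        ring
    choose A B C D hD e0 e1 e2 hsum hodd using rep
    refine ⟨fun u => if Odd (A u) then 0 else if Odd (B u) then 1 else 2, ?_⟩
    intro u v horth heq
    have hdot : A u * A v + B u * B v + C u * C v = 0 :=
      dot_int u v (A u) (B u) (C u) (D u) (A v) (B v) (C v) (D v) (hD u) (hD v)
        (e0 u) (e1 u) (e2 u) (e0 v) (e1 v) (e2 v) horth
    simp only at heq
    split_ifs at heq with h1 h2 h3 h4 h5 h6 h7 h8 h9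
    all_goals first
      | exact absurd heq (by decide)
      | exact key _ _ _ _ _ _ _ _ (hsum u) (hsum v) hdot
          (Or.inl ⟨‹Odd (A u)›, ‹Odd (A v)›⟩)
      | exact key _ _ _ _ _ _ _ _ (hsum u) (hsum v) hdot
          (Or.inr (Or.inl ⟨‹Odd (B u)›, ‹Odd (B v)›⟩))
      | exact key _ _ _ _ _ _ _ _ (hsum u) (hsum v) hdot
          (Or.inr (Or.inr ⟨((hodd u).resolve_left ‹¬ Odd (A u)›).resolve_left ‹¬ Odd (B u)›,
            ((hodd v).resolve_left ‹¬ Odd (A v)›).resolve_left ‹¬ Odd (B v)›⟩))
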